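/- Let E be a real inner product space, P ⊆ E a finite-dimensional (hence closed, with orthogonal projection proj_P) subspace, and let v₀, w ∈ E with v₀ ∉ P. Then there exists a continuous path v : [0,1] → E such that: v(0) = v₀; proj_P(v(1)) = proj_P(w); ‖v(1)‖ = max(‖v₀‖, ‖w‖); for every t ∈ [0,1], min(‖v₀‖, ‖w‖) ≤ ‖v(t)‖ ≤ max(‖v₀‖, ‖w‖); and for every t ∈ [0,1], proj_P(v(t)) lies on the segment joining proj_P(v₀) to proj_P(w). -/

import Mathlib

open scoped RealInnerProductSpace

/-- The homotopy lemma: in a real inner product space `E`, given a finite-dimensional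
subspace `P`, `v₀ ∉ P` and `w ∈ E`, there is a continuous path `v : [0,1] → E` starting at
`v₀`, ending at a point whose orthogonal projection on `P` is that of `w` and whose norm is
`max(‖v₀‖, ‖w‖)`, whose norm stays between `min(‖v₀‖, ‖w‖)` and `max(‖v₀‖, ‖w‖)`, and whose
projection on `P` stays on the segment joining `proj_P v₀` to `proj_P w`. -/
theorem homotopy_lemma {E : Type*} [NormedAddCommGroup E] [InnerProductSpace ℝ E]
    (P : Submodule ℝ E) [FiniteDimensional ℝ P]
    (v₀ w : E) (hv₀ : v₀ ∉ P) :
    ∃ v : ℝ → E,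
      ContinuousOn v (Set.Icc 0 1) ∧
      v 0 = v₀ ∧
      P.orthogonalProjectionOnto (v 1) = P.orthogonalProjectionOnto w ∧
      ‖v 1‖ = max ‖v₀‖ ‖w‖ ∧
      (∀ t ∈ Set.Icc (0:ℝ) 1, min ‖v₀‖ ‖w‖ ≤ ‖v t‖ ∧ ‖v t‖ ≤ max ‖v₀‖ ‖w‖) ∧
      (∀ t ∈ Set.Icc (0:ℝ) 1,
        (P.orthogonalProjectionOnto (v t) : E) ∈
          segment ℝ (P.orthogonalProjectionOnto v₀ : E) (P.orthogonalProjectionOnto w : E)) := by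
  classical
  set p₀ : E := (P.orthogonalProjectionOnto v₀ : E) with hp₀
  set p₁ : E := (P.orthogonalProjectionOnto w : E) with hp₁
  have hp₀P : p₀ ∈ P := (P.orthogonalProjectionOnto v₀).2
  have hp₁P : p₁ ∈ P := (P.orthogonalProjectionOnto w).2
  set q : E := v₀ - p₀ with hq
  have hqP : q ∈ Pᗮ := Submodule.sub_starProjection_mem_orthogonal (K := P) v₀
  have hq0 : q ≠ 0 := by
    intro h
    apply hv₀
    have : v₀ = p₀ := by rwa [hq, sub_eq_zero] at h
    rw [this]; exact hp₀P
  set u : E := ‖q‖⁻¹ • q with hu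
  have hun : ‖u‖ = 1 := norm_smul_inv_norm hq0
  have huP : u ∈ Pᗮ := Submodule.smul_mem _ _ hqP
  set M : ℝ := max ‖v₀‖ ‖w‖ with hM
  set p : ℝ → E := fun t => (1 - t) • p₀ + t • p₁ with hp
  set n : ℝ → ℝ := fun t => (1 - t) * ‖v₀‖ + t * M with hn
  set r : ℝ → ℝ := fun t => Real.sqrt (n t ^ 2 - ‖p t‖ ^ 2) with hr
  -- norms of projections
  have hnorm₀ : ‖v₀‖ ^ 2 = ‖p₀‖ ^ 2 + ‖q‖ ^ 2 := by
    have h1 : v₀ = p₀ + q := by rw [hq]; abel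
    have h2 : ⟪p₀, q⟫ = 0 := Submodule.inner_right_of_mem_orthogonal hp₀P hqP
    rw [h1, @norm_add_sq_real, h2]; ring
  have hle₀ : ‖p₀‖ ≤ ‖v₀‖ := by nlinarith [norm_nonneg p₀, norm_nonneg v₀, norm_nonneg q]
  have hle₁ : ‖p₁‖ ≤ ‖w‖ := by
    have h1 : w = p₁ + (w - p₁) := by abel
    have h2 : ⟪p₁, w - p₁⟫ = 0 :=
      Submodule.inner_right_of_mem_orthogonal hp₁P (Submodule.sub_starProjection_mem_orthogonal (K := P) w)
    have h3 : ‖w‖ ^ 2 = ‖p₁‖ ^ 2 + ‖w - p₁‖ ^ 2 := by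
      conv_lhs => rw [h1]
      rw [@norm_add_sq_real, h2]; ring
    nlinarith [norm_nonneg p₁, norm_nonneg w, norm_nonneg (w - p₁)]
  have hvM : ‖v₀‖ ≤ M := le_max_left _ _
  have hwM : ‖w‖ ≤ M := le_max_right _ _
  -- ‖p t‖ ≤ n t on [0,1]
  have hpn : ∀ t ∈ Set.Icc (0:ℝ) 1, ‖p t‖ ≤ n t := by
    rintro t ⟨ht0, ht1⟩
    have h1 : ‖p t‖ ≤ (1 - t) * ‖p₀‖ + t * ‖p₁‖ := by
      calc ‖p t‖ ≤ ‖(1 - t) • p₀‖ + ‖t • p₁‖ := norm_add_le _ _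
        _ = (1 - t) * ‖p₀‖ + t * ‖p₁‖ := by
            rw [norm_smul, norm_smul, Real.norm_eq_abs, Real.norm_eq_abs,
              abs_of_nonneg (by linarith), abs_of_nonneg ht0]
    have h2 : (1 - t) * ‖p₀‖ + t * ‖p₁‖ ≤ n t := by
      have := hwM
      simp only [hn]
      nlinarith
    linarith
  -- p t is in P
  have hptP : ∀ t, p t ∈ P := fun t =>
    P.add_mem (P.smul_mem _ hp₀P) (P.smul_mem _ hp₁P)
  -- projection of v t
  have hproj : ∀ t, (P.orthogonalProjectionOnto (p t + r t • u) : E) = p t := by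
    intro t
    rw [map_add, Submodule.coe_add,
      Submodule.coe_orthogonalProjectionOnto_apply P (p t),
      (Submodule.starProjection_eq_self_iff (K := P)).2 (hptP t),
      Submodule.orthogonalProjectionOnto_apply_of_mem_orthogonal
        (Submodule.smul_mem _ _ huP)]
    simp
  -- norm of v t on [0,1]
  have hnn : ∀ t ∈ Set.Icc (0:ℝ) 1, 0 ≤ n t := fun t ht =>
    le_trans (norm_nonneg _) (hpn t ht)
  have hnorm : ∀ t ∈ Set.Icc (0:ℝ) 1, ‖p t + r t • u‖ = n t := by
    intro t ht
    have h2 : ⟪p t, r t • u⟫ = 0 :=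
      Submodule.inner_right_of_mem_orthogonal (hptP t) (Submodule.smul_mem _ _ huP)
    have h3 : ‖p t + r t • u‖ ^ 2 = ‖p t‖ ^ 2 + (r t) ^ 2 := by
      rw [@norm_add_sq_real, h2, norm_smul, Real.norm_eq_abs, hun, mul_one, sq_abs]
      ring
    have h4 : (r t) ^ 2 = n t ^ 2 - ‖p t‖ ^ 2 := by
      rw [hr]
      exact Real.sq_sqrt (by nlinarith [hpn t ht, norm_nonneg (p t)])
    have h5 : ‖p t + r t • u‖ ^ 2 = n t ^ 2 := by rw [h3, h4]; ring
    calc ‖p t + r t • u‖ = Real.sqrt (‖p t + r t • u‖ ^ 2) :=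
          (Real.sqrt_sq (norm_nonneg _)).symm
      _ = Real.sqrt (n t ^ 2) := by rw [h5]
      _ = n t := Real.sqrt_sq (hnn t ht)
  refine ⟨fun t => p t + r t • u, ?_, ?_, ?_, ?_, ?_, ?_⟩
  · -- continuity
    have hpc : Continuous p := by
      apply Continuous.add
      · exact (continuous_const.sub continuous_id).smul continuous_const
      · exact continuous_id.smul continuous_const
    have hrc : Continuous r := by
      apply Real.continuous_sqrt.comp
      apply Continuous.sub
      · exact ((continuous_const.sub continuous_id).mul continuous_const |>.add
          (continuous_id.mul continuous_const)).pow 2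
      · exact (hpc.norm.pow 2)
    exact (hpc.add (hrc.smul continuous_const)).continuousOn
  · -- v 0 = v₀
    have hp0 : p 0 = p₀ := by simp [hp]
    have hn0 : n 0 = ‖v₀‖ := by simp [hn]
    have hr0 : r 0 = ‖q‖ := by
      rw [hr]
      simp only [hn0, hp0]
      rw [show ‖v₀‖ ^ 2 - ‖p₀‖ ^ 2 = ‖q‖ ^ 2 by linarith [hnorm₀]]
      exact Real.sqrt_sq (norm_nonneg q)
    show p 0 + r 0 • u = v₀
    rw [hp0, hr0, hu, smul_smul, mul_inv_cancel₀ (norm_ne_zero_iff.2 hq0), one_smul]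
    rw [hq]; abel
  · -- projection at 1
    have := hproj 1
    have hp1 : p 1 = p₁ := by simp [hp]
    apply Subtype.ext
    rw [this, hp1, hp₁]
  · -- norm at 1
    have := hnorm 1 ⟨zero_le_one, le_refl 1⟩
    have hn1 : n 1 = M := by simp [hn]
    rw [this, hn1]
  · -- norm bounds
    intro t ht
    rw [hnorm t ht]
    obtain ⟨ht0, ht1⟩ := ht
    have he1 : n t - ‖v₀‖ = t * (M - ‖v₀‖) := by simp only [hn]; ring
    have he2 : M - n t = (1 - t) * (M - ‖v₀‖) := by simp only [hn]; ring
    have h1 : 0 ≤ t * (M - ‖v₀‖) := mul_nonneg ht0 (by linarith)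
    have h2 : 0 ≤ (1 - t) * (M - ‖v₀‖) := mul_nonneg (by linarith) (by linarith)
    have hmin : min ‖v₀‖ ‖w‖ ≤ ‖v₀‖ := min_le_left _ _
    constructor <;> linarith
  · -- segment
    intro t ht
    rw [hproj t]
    exact ⟨1 - t, t, by linarith [ht.2], ht.1, by ring, rfl⟩
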